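/- Let C ⊂ ℙ^2 be a smooth conic (the zero locus of a nondegenerate quadratic form in x_0, x_1, x_2 over ℂ). Fix an integer d ≥ 1 and a finite set S ⊂ C with #S ≤ 2d + 1. Then S imposes independent conditions on degree-d forms; equivalently, the d-th powers { L_s^d : s ∈ S } of linear forms representing the points of S are linearly independent in the space of degree-d homogeneous polynomials. -/

import Mathlib

open MvPolynomial Module

noncomputable section

/-- The linear form `∑ v i • x i` associated to a vector `v : ℂ³`. -/
def toLinForm (m : ℕ) (v : Fin (m+1) → ℂ) : MvPolynomial (Fin (m+1)) ℂ :=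
  ∑ i, MvPolynomial.C (v i) * MvPolynomial.X i

/-- The `d`-th power `L_p^d` of a linear form representing the point `p ∈ ℙ^m`. -/
def vpow (m d : ℕ) (p : Projectivization ℂ (Fin (m+1) → ℂ)) : MvPolynomial (Fin (m+1)) ℂ :=
  (toLinForm m p.rep) ^ d

/-- The evaluation map sending a degree-`x` form in `x_0, …, x_m` to its values at
the chosen representative vectors of the points of `W ⊂ ℙ^m`. -/
def evalMap (m x : ℕ) (W : Finset (Projectivization ℂ (Fin (m+1) → ℂ))) :
    (homogeneousSubmodule (Fin (m+1)) ℂ x) →ₗ[ℂ] (W → ℂ) :=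
  (LinearMap.pi fun w : W =>
    (MvPolynomial.aeval ((w : Projectivization ℂ (Fin (m+1) → ℂ)).rep)).toLinearMap) ∘ₗ
    (homogeneousSubmodule (Fin (m+1)) ℂ x).subtype

section Aux

lemma aeval_eq_eval' (w : Fin (2+1) → ℂ) (F : MvPolynomial (Fin (2+1)) ℂ) :
    MvPolynomial.aeval w F = MvPolynomial.eval w F :=
  DFunLike.congr_fun (MvPolynomial.coe_aeval_eq_eval w) F

abbrev PP := Projectivization ℂ (Fin (2+1) → ℂ)

lemma proj_eq_of_smul (p r : PP) (cv : ℂ) (h : r.rep = cv • p.rep) : r = p := by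
  have hc : cv ≠ 0 := by
    rintro rfl
    exact r.rep_nonzero (by simpa using h)
  rw [← Projectivization.mk_rep p, ← Projectivization.mk_rep r]
  exact (Projectivization.mk_eq_mk_iff ℂ _ _ r.rep_nonzero p.rep_nonzero).mpr
    ⟨Units.mk0 cv hc, h.symm⟩

lemma indep_reps (p r : PP) (hpr : r ≠ p) :
    ∀ u w : ℂ, u • p.rep + w • r.rep = 0 → u = 0 ∧ w = 0 := by
  intro u w huw
  by_cases hw : w = 0
  · subst hw
    refine ⟨?_, rfl⟩
    rw [zero_smul, add_zero] at huw
    exact (smul_eq_zero.mp huw).resolve_right p.rep_nonzero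
  · exfalso
    apply hpr
    apply proj_eq_of_smul p r (-(w⁻¹ * u))
    have h1 : w • r.rep = -(u • p.rep) := eq_neg_of_add_eq_zero_right huw
    calc r.rep = w⁻¹ • (w • r.rep) := by rw [smul_smul, inv_mul_cancel₀ hw, one_smul]
      _ = (-(w⁻¹ * u)) • p.rep := by rw [h1, smul_neg, smul_smul, ← neg_smul]

lemma not_mem_span_pair (q : QuadraticForm ℂ (Fin (2+1) → ℂ))
    (hq : q.polarBilin.Nondegenerate)
    (s p r : PP) (hqs : q s.rep = 0) (hqp : q p.rep = 0) (hqr : q r.rep = 0)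
    (hsp : s ≠ p) (hsr : s ≠ r) :
    s.rep ∉ Submodule.span ℂ {p.rep, r.rep} := by
  set B := q.polarBilin with hB
  intro hmem
  obtain ⟨x, y, hxy⟩ := Submodule.mem_span_pair.mp hmem
  by_cases hpr : r = p
  · exact hsp (proj_eq_of_smul p s (x + y) (by rw [← hxy, hpr, add_smul]))
  have hind := indep_reps p r hpr
  have e1 : q (x • p.rep + y • r.rep) = x * (y * QuadraticMap.polar ⇑q p.rep r.rep) := by
    rw [QuadraticMap.map_add ⇑q, QuadraticMap.map_smul, QuadraticMap.map_smul, hqp, hqr,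
      QuadraticMap.polar_smul_left, QuadraticMap.polar_smul_right]
    simp [smul_eq_mul]
  rw [hxy, hqs] at e1
  by_cases hBpr : QuadraticMap.polar ⇑q p.rep r.rep = 0
  · -- degenerate line : contradiction with nondegeneracy
    have hBpp : QuadraticMap.polar ⇑q p.rep p.rep = 0 := by
      rw [QuadraticMap.polar_self, hqp, smul_zero]
    have hBrr : QuadraticMap.polar ⇑q r.rep r.rep = 0 := by
      rw [QuadraticMap.polar_self, hqr, smul_zero]
    have hBrp : QuadraticMap.polar ⇑q r.rep p.rep = 0 := by
      rw [QuadraticMap.polar_comm]; exact hBpr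
    set W : Submodule ℂ (Fin (2+1) → ℂ) := Submodule.span ℂ {p.rep, r.rep} with hW
    have hLI : LinearIndependent ℂ ![p.rep, r.rep] :=
      LinearIndependent.pair_iff.mpr hind
    have hrange : Set.range ![p.rep, r.rep] = {p.rep, r.rep} := by
      simp [Matrix.range_cons, Matrix.range_empty, Set.pair_comm]
    have hfrW : finrank ℂ W = 2 := by
      rw [hW, ← hrange, finrank_span_eq_card hLI]
      simp
    have hfrV : finrank ℂ (Fin (2+1) → ℂ) = 3 := by simp
    have hWne : W ≠ ⊤ := by
      intro h
      rw [h, finrank_top, hfrV] at hfrW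
      omega
    obtain ⟨u, -, hu⟩ := SetLike.exists_of_lt (Ne.lt_top (α := Submodule ℂ (Fin (2+1) → ℂ)) hWne)
    set W' : Submodule ℂ (Fin (2+1) → ℂ) := W ⊔ Submodule.span ℂ {u} with hW'
    have huW' : u ∈ W' := Submodule.mem_sup_right (Submodule.mem_span_singleton_self u)
    have hlt : W < W' := lt_of_le_of_ne le_sup_left (fun h => hu (h ▸ huW'))
    have hW'top : W' = ⊤ := by
      apply Submodule.eq_top_of_finrank_eq
      have h1 := Submodule.finrank_lt_finrank_of_lt hlt
      have h2 : finrank ℂ W' ≤ finrank ℂ (Fin (2+1) → ℂ) := Submodule.finrank_le W'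
      omega
    -- B x vanishes identically if it vanishes at p.rep, r.rep, u
    have key : ∀ z : Fin (2+1) → ℂ, B z p.rep = 0 → B z r.rep = 0 → B z u = 0 → z = 0 := by
      intro z h1 h2 h3
      apply hq.1 z
      intro w
      have hw : w ∈ W' := hW'top ▸ Submodule.mem_top
      obtain ⟨a, ha, b, hb, rfl⟩ := Submodule.mem_sup.mp hw
      obtain ⟨m, n, rfl⟩ := Submodule.mem_span_pair.mp ha
      obtain ⟨t, rfl⟩ := Submodule.mem_span_singleton.mp hb
      simp [map_add, map_smul, h1, h2, h3]
    have hBpu : B p.rep u ≠ 0 := by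
      intro h0
      exact p.rep_nonzero (key p.rep (by rw [hB]; simpa using hBpp)
        (by rw [hB]; simpa using hBpr) h0)
    have hBru : B r.rep u ≠ 0 := by
      intro h0
      exact r.rep_nonzero (key r.rep (by rw [hB]; simpa using hBrp)
        (by rw [hB]; simpa using hBrr) h0)
    set v : Fin (2+1) → ℂ := (B r.rep u) • p.rep - (B p.rep u) • r.rep with hv
    have hvne : v ≠ 0 := by
      intro h0
      apply hBru
      have : (B r.rep u) • p.rep + (-(B p.rep u)) • r.rep = 0 := by
        rw [neg_smul, ← sub_eq_add_neg, ← hv, h0]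
      exact (hind _ _ this).1
    apply hvne
    apply key v
    · rw [hv, map_sub, map_smul, map_smul, LinearMap.sub_apply, LinearMap.smul_apply,
        LinearMap.smul_apply]
      have h1 : B p.rep p.rep = 0 := by rw [hB]; simpa using hBpp
      have h2 : B r.rep p.rep = 0 := by rw [hB]; simpa using hBrp
      rw [h1, h2]; simp
    · rw [hv, map_sub, map_smul, map_smul, LinearMap.sub_apply, LinearMap.smul_apply,
        LinearMap.smul_apply]
      have h1 : B p.rep r.rep = 0 := by rw [hB]; simpa using hBpr
      have h2 : B r.rep r.rep = 0 := by rw [hB]; simpa using hBrr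
      rw [h1, h2]; simp
    · rw [hv, map_sub, map_smul, map_smul, LinearMap.sub_apply, LinearMap.smul_apply,
        LinearMap.smul_apply]
      simp [smul_eq_mul]
      ring
  · -- nondegenerate case : x = 0 or y = 0
    rcases mul_eq_zero.mp e1.symm with h | h
    · subst h
      rw [zero_smul, zero_add] at hxy
      exact hsr (proj_eq_of_smul r s y hxy.symm)
    · rcases mul_eq_zero.mp h with h' | h'
      · subst h'
        rw [zero_smul, add_zero] at hxy
        exact hsp (proj_eq_of_smul p s x hxy.symm)
      · exact hBpr h'

lemma aeval_toLinForm (m : ℕ) (v w : Fin (m+1) → ℂ) :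
    MvPolynomial.aeval w (toLinForm m v) = ∑ i, v i * w i := by
  simp [toLinForm]

lemma pderiv_toLinForm (m : ℕ) (v : Fin (m+1) → ℂ) (i : Fin (m+1)) :
    pderiv i (toLinForm m v) = C (v i) := by
  rw [toLinForm, map_sum]
  rw [Finset.sum_eq_single i]
  · simp
  · intro j _ hj; rw [pderiv_C_mul, pderiv_X_of_ne hj, mul_zero]
  · simp

lemma toLinForm_isHomogeneous (m : ℕ) (v : Fin (m+1) → ℂ) :
    (toLinForm m v).IsHomogeneous 1 := by
  apply IsHomogeneous.sum
  intro i _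
  exact (isHomogeneous_C _ _).mul (isHomogeneous_X _ _)

lemma pderiv_iterate (m : ℕ) (v : Fin (m+1) → ℂ) (i : Fin (m+1)) :
    ∀ k n : ℕ, k ≤ n →
    (pderiv i)^[k] ((toLinForm m v) ^ n)
      = C (v i ^ k * (n.descFactorial k)) * (toLinForm m v) ^ (n - k) := by
  intro k
  induction k with
  | zero => intro n _; simp
  | succ k ih =>
    intro n hkn
    rw [Function.iterate_succ_apply', ih n (le_of_lt hkn), pderiv_C_mul, pderiv_pow,
      pderiv_toLinForm]
    have hsc : v i ^ k * ((n.descFactorial k : ℕ):ℂ) * (((n-k : ℕ):ℕ):ℂ) * v i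
        = v i ^ (k+1) * ((n.descFactorial (k+1) : ℕ):ℂ) := by
      rw [Nat.descFactorial_succ]; push_cast; ring
    have hnk : (((n - k:ℕ)) : MvPolynomial (Fin (m+1)) ℂ) = C (((n-k:ℕ):ℕ) : ℂ) := by
      push_cast; simp
    have hex : n - k - 1 = n - (k+1) := by omega
    rw [hnk, hex, ← hsc]; simp only [map_mul, map_pow]
    ring

lemma iterate_pderiv_C_mul (m : ℕ) (i : Fin (m+1)) (a : ℂ) (k : ℕ)
    (F : MvPolynomial (Fin (m+1)) ℂ) :
    (pderiv i)^[k] (C a * F) = C a * (pderiv i)^[k] F := by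
  induction k generalizing F with
  | zero => rfl
  | succ k ih => rw [Function.iterate_succ_apply, pderiv_C_mul, ih, ← Function.iterate_succ_apply]

lemma triple_deriv (v : Fin (2+1) → ℂ) (a b c d : ℕ) (h : a + b + c = d) :
    (pderiv (0 : Fin (2+1)))^[a] ((pderiv (1 : Fin (2+1)))^[b]
      ((pderiv (2 : Fin (2+1)))^[c] ((toLinForm 2 v) ^ d)))
      = C ((d.factorial : ℂ) * (v 0 ^ a * v 1 ^ b * v 2 ^ c)) := by
  rw [pderiv_iterate 2 v 2 c d (by omega), iterate_pderiv_C_mul,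
    pderiv_iterate 2 v 1 b (d - c) (by omega), iterate_pderiv_C_mul,
    iterate_pderiv_C_mul, pderiv_iterate 2 v 0 a (d - c - b) (by omega)]
  have h3 : d - c - b = a := by omega
  have h4 : d - c - b - a = 0 := by omega
  have hnat : (d - c - b).descFactorial a * ((d - c).descFactorial b * d.descFactorial c)
      = d.factorial := by
    rw [h3, Nat.descFactorial_self]
    have h1 : (d - c).factorial * d.descFactorial c = d.factorial :=
      Nat.factorial_mul_descFactorial (by omega)
    have h2 : (d - c - b).factorial * (d - c).descFactorial b = (d - c).factorial :=
      Nat.factorial_mul_descFactorial (by omega)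
    rw [← h1, ← h2, h3]
    ring
  rw [h4, pow_zero, mul_one, ← map_mul, ← map_mul]
  congr 1
  push_cast [← hnat]
  ring
lemma sum_pow_monomial {ι : Type*} [Fintype ι] (vv : ι → (Fin (2+1) → ℂ))
    (cc : ι → ℂ) (d : ℕ)
    (h : ∑ i, cc i • (toLinForm 2 (vv i)) ^ d = 0) (a b c : ℕ) (habc : a + b + c = d) :
    ∑ i, cc i * (vv i 0 ^ a * vv i 1 ^ b * vv i 2 ^ c) = 0 := by
  set E : MvPolynomial (Fin (2+1)) ℂ →ₗ[ℂ] MvPolynomial (Fin (2+1)) ℂ :=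
    ((pderiv (0 : Fin (2+1))).toLinearMap ^ a) ∘ₗ
    ((pderiv (1 : Fin (2+1))).toLinearMap ^ b) ∘ₗ
    ((pderiv (2 : Fin (2+1))).toLinearMap ^ c) with hEdef
  have hE : ∀ F, E F = (pderiv (0 : Fin (2+1)))^[a] ((pderiv (1 : Fin (2+1)))^[b]
      ((pderiv (2 : Fin (2+1)))^[c] F)) := by
    intro F
    simp [hEdef, Module.End.pow_apply]
  have h2 := congrArg E h
  rw [map_sum, map_zero] at h2
  have h3 : ∑ i, C (cc i * ((d.factorial : ℂ) * (vv i 0 ^ a * vv i 1 ^ b * vv i 2 ^ c)))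
      = (0 : MvPolynomial (Fin (2+1)) ℂ) := by
    rw [← h2]
    apply Finset.sum_congr rfl
    intro i _
    rw [map_smul, hE, triple_deriv (vv i) a b c d habc, map_mul]
    rw [smul_eq_C_mul]
  rw [← map_sum] at h3
  have h4 : ∑ x : ι, cc x * ((d.factorial : ℂ) * (vv x 0 ^ a * vv x 1 ^ b * vv x 2 ^ c)) = 0 :=
    by exact_mod_cast (MvPolynomial.C_eq_zero ..).mp h3
  have h5 : (d.factorial : ℂ) * ∑ i, cc i * (vv i 0 ^ a * vv i 1 ^ b * vv i 2 ^ c) = 0 := by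
    rw [Finset.mul_sum, ← h4]
    exact Finset.sum_congr rfl fun i _ => by ring
  have h6 : (d.factorial : ℂ) ≠ 0 := Nat.cast_ne_zero.mpr (Nat.factorial_ne_zero d)
  exact (mul_eq_zero.mp h5).resolve_left h6
lemma sum_eval {ι : Type*} [Fintype ι] (vv : ι → (Fin (2+1) → ℂ)) (cc : ι → ℂ) (d : ℕ)
    (hmon : ∀ a b c : ℕ, a + b + c = d →
      ∑ i, cc i * (vv i 0 ^ a * vv i 1 ^ b * vv i 2 ^ c) = 0)
    (F : MvPolynomial (Fin (2+1)) ℂ) (hF : F.IsHomogeneous d) :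
    ∑ i, cc i * MvPolynomial.eval (vv i) F = 0 := by
  have key : ∀ i : ι, MvPolynomial.eval (vv i) F
      = ∑ α ∈ F.support, MvPolynomial.coeff α F * ∏ j, vv i j ^ α j :=
    fun i => MvPolynomial.eval_eq' (vv i) F
  calc ∑ i, cc i * MvPolynomial.eval (vv i) F
      = ∑ i, ∑ α ∈ F.support, cc i * (MvPolynomial.coeff α F * ∏ j, vv i j ^ α j) := by
        simp only [key, Finset.mul_sum]
    _ = ∑ α ∈ F.support, MvPolynomial.coeff α F *
          ∑ i, cc i * (vv i 0 ^ α 0 * vv i 1 ^ α 1 * vv i 2 ^ α 2) := by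
        rw [Finset.sum_comm]
        apply Finset.sum_congr rfl
        intro α _
        rw [Finset.mul_sum]
        apply Finset.sum_congr rfl
        intro i _
        rw [Fin.prod_univ_three]
        ring
    _ = 0 := by
        apply Finset.sum_eq_zero
        intro α hα
        have hdeg : α 0 + α 1 + α 2 = d := by
          have h1 := hF (MvPolynomial.mem_support_iff.mp hα)
          have h2 : Finsupp.degree α = ∑ j : Fin (2+1), α j := by
            apply Finset.sum_subset (Finset.subset_univ _)
            intro j _ hj
            exact Finsupp.notMem_support_iff.mp hj
          change (Finsupp.weight (fun _ => 1)) α = d at h1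
          rw [← Finsupp.degree_eq_weight_one] at h1
          rw [Fin.sum_univ_three] at h2
          omega
        rw [hmon (α 0) (α 1) (α 2) hdeg, mul_zero]

/-- From a dual functional, produce a linear form (degree-1 polynomial) with
matching evaluations. -/
lemma exists_linear_form (f : Module.Dual ℂ (Fin (2+1) → ℂ)) :
    ∃ cvec : Fin (2+1) → ℂ, ∀ w : Fin (2+1) → ℂ,
      MvPolynomial.eval w (toLinForm 2 cvec) = f w := by
  refine ⟨fun i => f (Pi.single i 1), fun w => ?_⟩
  have hw : w = ∑ i, Pi.single i (w i) := (Finset.univ_sum_single w).symm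
  rw [toLinForm]
  conv_rhs => rw [hw]
  rw [map_sum]
  simp only [map_sum, map_mul, eval_C, eval_X]
  apply Finset.sum_congr rfl
  intro i _
  have : (Pi.single i (w i) : Fin (2+1) → ℂ) = w i • (Pi.single i 1 : Fin (2+1) → ℂ) := by
    rw [← Pi.single_smul, smul_eq_mul, mul_one]
  rw [this, map_smul, smul_eq_mul, mul_comm]

/-- Separating linear form : vanishes at `p.rep`, `r.rep` but not at `s.rep`. -/
lemma exists_sep_linear (q : QuadraticForm ℂ (Fin (2+1) → ℂ))
    (hq : q.polarBilin.Nondegenerate)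
    (s p r : PP) (hqs : q s.rep = 0) (hqp : q p.rep = 0) (hqr : q r.rep = 0)
    (hsp : s ≠ p) (hsr : s ≠ r) :
    ∃ ℓ : MvPolynomial (Fin (2+1)) ℂ, ℓ.IsHomogeneous 1 ∧
      MvPolynomial.eval p.rep ℓ = 0 ∧ MvPolynomial.eval r.rep ℓ = 0 ∧
      MvPolynomial.eval s.rep ℓ ≠ 0 := by
  have hmem := not_mem_span_pair q hq s p r hqs hqp hqr hsp hsr
  obtain ⟨f, hf1, hf2⟩ := Submodule.exists_dual_map_eq_bot_of_notMem hmem inferInstance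
  have hker : ∀ y ∈ Submodule.span ℂ {p.rep, r.rep}, f y = 0 := by
    intro y hy
    rw [← Submodule.mem_bot (R := ℂ), ← hf2]
    exact Submodule.mem_map_of_mem hy
  obtain ⟨cvec, hcvec⟩ := exists_linear_form f
  refine ⟨toLinForm 2 cvec, toLinForm_isHomogeneous 2 cvec, ?_, ?_, ?_⟩
  · rw [hcvec]; exact hker _ (Submodule.subset_span (by simp))
  · rw [hcvec]; exact hker _ (Submodule.subset_span (by simp))
  · rw [hcvec]; exact hf1

lemma exists_separating (q : QuadraticForm ℂ (Fin (2+1) → ℂ))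
    (hq : q.polarBilin.Nondegenerate) (s : PP) (hqs : q s.rep = 0) :
    ∀ n : ℕ, ∀ T : Finset PP, (∀ p ∈ T, q p.rep = 0) → s ∉ T → T.card ≤ 2*n →
    ∃ F : MvPolynomial (Fin (2+1)) ℂ, F.IsHomogeneous n ∧
      (∀ t ∈ T, MvPolynomial.eval t.rep F = 0) ∧ MvPolynomial.eval s.rep F ≠ 0 := by
  classical
  intro n
  induction n with
  | zero =>
    intro T _ _ hcard
    have : T = ∅ := Finset.card_eq_zero.mp (by omega)
    subst this
    exact ⟨1, isHomogeneous_one _ _, by simp, by simp⟩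
  | succ n ih =>
    intro T hT hsT hcard
    rcases Finset.eq_empty_or_nonempty T with rfl | ⟨p, hp⟩
    · obtain ⟨F, hF1, hF2, hF3⟩ := ih ∅ (by simp) (by simp) (by simp)
      obtain ⟨j, hj⟩ := Function.ne_iff.mp s.rep_nonzero
      refine ⟨X j * F, ?_, by simp, ?_⟩
      · have := (isHomogeneous_X ℂ j).mul hF1
        simpa [add_comm] using this
      · rw [map_mul, eval_X]
        exact mul_ne_zero hj hF3
    · -- pick a second point r (possibly = p)
      set T₂ := T.erase p with hT₂
      by_cases h2 : T₂.Nonempty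
      · obtain ⟨r, hr⟩ := h2
        have hrT : r ∈ T := Finset.mem_of_mem_erase hr
        have hrp : r ≠ p := Finset.ne_of_mem_erase hr
        set T' := T₂.erase r with hT'
        have hcard' : T'.card ≤ 2*n := by
          have h1 : T₂.card = T.card - 1 := Finset.card_erase_of_mem hp
          have h2' : T'.card = T₂.card - 1 := Finset.card_erase_of_mem hr
          have h3 : 1 ≤ T₂.card := Finset.card_pos.mpr ⟨r, hr⟩
          have h4 : 1 ≤ T.card := Finset.card_pos.mpr ⟨p, hp⟩
          omega
        obtain ⟨F, hF1, hF2, hF3⟩ := ih T'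
          (fun t ht => hT t (Finset.mem_of_mem_erase (Finset.mem_of_mem_erase ht)))
          (fun h => hsT (Finset.mem_of_mem_erase (Finset.mem_of_mem_erase h))) hcard'
        obtain ⟨ℓ, hl1, hl2, hl3, hl4⟩ := exists_sep_linear q hq s p r hqs (hT p hp) (hT r hrT)
          (fun h => hsT (h ▸ hp)) (fun h => hsT (h ▸ hrT))
        refine ⟨ℓ * F, by simpa [add_comm] using hl1.mul hF1, ?_, ?_⟩
        · intro t ht
          rw [map_mul]
          by_cases htp : t = p
          · rw [htp, hl2, zero_mul]
          by_cases htr : t = r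
          · rw [htr, hl3, zero_mul]
          · rw [hF2 t (Finset.mem_erase.mpr ⟨htr, Finset.mem_erase.mpr ⟨htp, ht⟩⟩), mul_zero]
        · rw [map_mul]; exact mul_ne_zero hl4 hF3
      · -- T = {p}
        have hT2e : T₂ = ∅ := Finset.not_nonempty_iff_eq_empty.mp h2
        have hTp : T = {p} := by
          rcases (Finset.erase_eq_empty_iff T p).mp hT2e with h | h
          · exact absurd hp (h ▸ Finset.notMem_empty p)
          · exact h
        obtain ⟨F, hF1, hF2, hF3⟩ := ih ∅ (by simp) (by simp) (by simp)
        obtain ⟨ℓ, hl1, hl2, hl3, hl4⟩ := exists_sep_linear q hq s p p hqs (hT p hp) (hT p hp)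
          (fun h => hsT (h ▸ hp)) (fun h => hsT (h ▸ hp))
        refine ⟨ℓ * F, by simpa [add_comm] using hl1.mul hF1, ?_, ?_⟩
        · intro t ht
          rw [hTp, Finset.mem_singleton] at ht
          rw [map_mul, ht, hl2, zero_mul]
        · rw [map_mul]; exact mul_ne_zero hl4 hF3
end Aux

/-- At most `2d + 1` points on a smooth conic `C ⊂ ℙ²` impose independent
conditions on degree-`d` forms; equivalently, the `d`-th powers of linear forms
representing the points are linearly independent. -/
theorem points_on_conic_independent (d : ℕ) (hd : 1 ≤ d)
    (q : QuadraticForm ℂ (Fin (2+1) → ℂ))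
    (hq : q.polarBilin.Nondegenerate)
    (S : Finset (Projectivization ℂ (Fin (2+1) → ℂ)))
    (hSC : ∀ p ∈ S, q p.rep = 0)
    (hcard : S.card ≤ 2 * d + 1) :
    Function.Surjective (evalMap 2 d S) ∧
    LinearIndependent ℂ
      (fun p : (S : Set (Projectivization ℂ (Fin (2+1) → ℂ))) => vpow 2 d p) := by
  classical
  -- basis elements of the target are hit
  have hbasis : ∀ w : ↥S, ∃ G : homogeneousSubmodule (Fin (2+1)) ℂ d,
      evalMap 2 d S G = Pi.single w 1 := by
    intro w
    have hws : (w : PP) ∈ S := w.2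
    obtain ⟨F, hFhom, hF0, hFne⟩ := exists_separating q hq (w : PP) (hSC _ hws) d
      (S.erase (w : PP)) (fun t ht => hSC t (Finset.mem_of_mem_erase ht))
      (Finset.notMem_erase _ _)
      (by have := Finset.card_erase_of_mem hws; omega)
    set cs : ℂ := MvPolynomial.eval (w : PP).rep F with hcs
    refine ⟨cs⁻¹ • ⟨F, (mem_homogeneousSubmodule _ _).mpr hFhom⟩, ?_⟩
    funext w'
    have happ : evalMap 2 d S (cs⁻¹ • ⟨F, (mem_homogeneousSubmodule _ _).mpr hFhom⟩) w'
        = cs⁻¹ * MvPolynomial.eval (w' : PP).rep F := by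
      simp [evalMap, aeval_eq_eval']
    rw [happ]
    by_cases hww : w' = w
    · subst hww
      rw [Pi.single_eq_same, ← hcs, inv_mul_cancel₀ hFne]
    · have : (w' : PP) ∈ S.erase (w : PP) :=
        Finset.mem_erase.mpr ⟨fun h => hww (Subtype.ext h), w'.2⟩
      rw [hF0 _ this, mul_zero, Pi.single_eq_of_ne hww]
  have hsurj : Function.Surjective (evalMap 2 d S) := by
    intro g
    choose G hG using hbasis
    refine ⟨∑ w : ↥S, g w • G w, ?_⟩
    rw [map_sum]
    funext w'
    simp only [Finset.sum_apply, map_smul, hG, Pi.smul_apply, smul_eq_mul]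
    have : ∀ w : ↥S, g w * (Pi.single w (1:ℂ) : ↥S → ℂ) w' = (Pi.single w (g w) : ↥S → ℂ) w' := by
      intro w
      by_cases h : w' = w
      · subst h; simp
      · rw [Pi.single_eq_of_ne h, Pi.single_eq_of_ne h, mul_zero]
    simp only [this]
    have := congrFun (Finset.univ_sum_single g) w'
    simpa using this
  refine ⟨hsurj, ?_⟩
  rw [Fintype.linearIndependent_iff]
  intro cc hsum i0
  set vv : ↥(S : Set PP) → (Fin (2+1) → ℂ) := fun i => (i : PP).rep with hvv
  have hmon := sum_pow_monomial vv cc d (by simpa [vpow, hvv] using hsum)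
  set w0 : ↥S := ⟨i0.1, i0.2⟩ with hw0
  obtain ⟨G, hG⟩ := hsurj (Pi.single w0 1)
  have heval := sum_eval vv cc d hmon G.1 ((mem_homogeneousSubmodule _ _).mp G.2)
  have hGeval : ∀ i : ↥(S : Set PP),
      MvPolynomial.eval (vv i) G.1 = (Pi.single w0 (1:ℂ) : ↥S → ℂ) ⟨i.1, i.2⟩ := by
    intro i
    have := congrFun hG ⟨i.1, i.2⟩
    simpa [evalMap, aeval_eq_eval', hvv] using this
  rw [Fintype.sum_eq_single i0 (fun i hi => ?_)] at heval
  · rw [hGeval i0] at heval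
    simpa [hw0] using heval
  · rw [hGeval i]
    have hne : (⟨i.1, i.2⟩ : ↥S) ≠ w0 := by
      intro h
      exact hi (Subtype.ext (congrArg Subtype.val h))
    rw [Pi.single_eq_of_ne hne, mul_zero]

end
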